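/- In a simply-laced triangle-free Coxeter system, if φ is a Fibonacci link of rank r, then the braid graph B(φ) is isomorphic to the Fibonacci cube 𝔽_r, the subgraph of the hypercube Q_r induced by binary strings of length r containing no two consecutive 1's. -/

import Mathlib

open List

namespace BraidFormal

variable {B : Type*}

/-- A single braid move: replace a factor `s t s` with `t s t` where `m(s,t) = 3`. -/
def IsBraidMove (M : CoxeterMatrix B) (w w' : List B) : Prop :=
  ∃ (u v : List B) (s t : B), M s t = 3 ∧
    w = u ++ [s, t, s] ++ v ∧ w' = u ++ [t, s, t] ++ v

/-- Braid equivalence: the reflexive-transitive closure of braid moves. -/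
def BraidEquiv (M : CoxeterMatrix B) : List B → List B → Prop :=
  Relation.ReflTransGen (IsBraidMove M)

/-- The braid class of a word. -/
def BraidClass (M : CoxeterMatrix B) (α : List B) : Set (List B) :=
  {β | BraidEquiv M α β}

/-- `w` has a braid shadow at (0-based) positions `i, i+1, i+2`:
the letters there are `s, t, s` with `m(s,t) = 3`.
(This corresponds to the 1-based interval `⟦i+1, i+3⟧` of the paper.) -/
def HasShadowAt (M : CoxeterMatrix B) (w : List B) (i : ℕ) : Prop :=
  ∃ s t : B, M s t = 3 ∧ w[i]? = some s ∧ w[i+1]? = some t ∧ w[i+2]? = some s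

/-- The braid class of `α` has a braid shadow at position `i`. -/
def ClassHasShadowAt (M : CoxeterMatrix B) (α : List B) (i : ℕ) : Prop :=
  ∃ β ∈ BraidClass M α, HasShadowAt M β i

/-- The rank of a reduced expression: the number of braid shadows of its braid class. -/
noncomputable def rank (M : CoxeterMatrix B) (α : List B) : ℕ :=
  Set.ncard {i | ClassHasShadowAt M α i}

/-- A Coxeter matrix is simply laced if all entries are at most 3. -/
def SimplyLaced (M : CoxeterMatrix B) : Prop := ∀ s t : B, M s t ≤ 3

/-- A Coxeter matrix is triangle free if its Coxeter graph has no three-cycles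
(all of whose edges are labelled 3). -/
def TriangleFree (M : CoxeterMatrix B) : Prop :=
  ∀ s t u : B, s ≠ t → t ≠ u → s ≠ u → M s t = 3 → M t u = 3 → M s u ≠ 3

/-- The set of generators appearing in (0-based) position `k` of some word in the
braid class of `α`. -/
def classSupp (M : CoxeterMatrix B) (α : List B) (k : ℕ) : Set B :=
  {s | ∃ β ∈ BraidClass M α, β[k]? = some s}

/-- The set of generators appearing in (0-based) positions `i` through `j` of `w`. -/
def suppInterval (w : List B) (i j : ℕ) : Set B :=
  {s | ∃ k, i ≤ k ∧ k ≤ j ∧ w[k]? = some s}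

variable {W : Type*} [Group W] {M : CoxeterMatrix B}

/-- `α` is a link of rank `r`: a reduced expression of length `2r+1` whose braid class
has braid shadows exactly at the (0-based) positions `0, 2, 4, …, 2r-2`
(the 1-based intervals `⟦1,3⟧, ⟦3,5⟧, …, ⟦2r-1,2r+1⟧`). -/
def IsLink (cs : CoxeterSystem M W) (α : List B) (r : ℕ) : Prop :=
  cs.IsReduced α ∧ α.length = 2 * r + 1 ∧
    ∀ i : ℕ, ClassHasShadowAt M α i ↔ ∃ j < r, i = 2 * j

/-- A Fibonacci link: a link all of whose braid-class braid shadows are braid shadows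
of the link itself. -/
def IsFibLink (cs : CoxeterSystem M W) (φ : List B) (r : ℕ) : Prop :=
  IsLink cs φ r ∧ ∀ i : ℕ, ClassHasShadowAt M φ i → HasShadowAt M φ i

/-- The hypercube graph `Q_r`: vertices are binary strings of length `r`, adjacent
exactly when they differ in a single coordinate (Hamming distance one). -/
def hypercube (r : ℕ) : SimpleGraph (Fin r → Bool) :=
  SimpleGraph.fromRel (fun x y => hammingDist x y = 1)

/-- An isometric embedding of graphs: a map preserving the geodesic distance. -/
def IsIsometricEmbedding {V V' : Type*} (G : SimpleGraph V) (H : SimpleGraph V')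
    (f : V → V') : Prop :=
  ∀ u v : V, G.dist u v = H.dist (f u) (f v)

/-- A partial cube: a connected graph isometrically embeddable into some hypercube. -/
def IsPartialCube {V : Type*} (G : SimpleGraph V) : Prop :=
  G.Connected ∧ ∃ (r : ℕ) (f : V → Fin r → Bool), IsIsometricEmbedding G (hypercube r) f

/-- The isometric dimension of a graph: the least dimension of a hypercube into which
it embeds isometrically. -/
noncomputable def isoDim {V : Type*} (G : SimpleGraph V) : ℕ :=
  sInf {r : ℕ | ∃ f : V → Fin r → Bool, IsIsometricEmbedding G (hypercube r) f}

/-- The braid graph of `α`: vertices are the members of the braid class of `α`,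
with edges given by single braid moves. -/
def braidGraph (M : CoxeterMatrix B) (α : List B) : SimpleGraph (BraidClass M α) :=
  SimpleGraph.fromRel (fun β γ => IsBraidMove M β.1 γ.1)

/-- A binary string has no two consecutive ones. -/
def NoConsecOnes {r : ℕ} (x : Fin r → Bool) : Prop :=
  ∀ (i : Fin r) (h : (i : ℕ) + 1 < r), ¬(x i = true ∧ x ⟨(i : ℕ) + 1, h⟩ = true)

/-! ### Auxiliary machinery -/

section Aux

lemma app3_getElem? (u v : List B) (c₀ c₁ c₂ : B) (q : ℕ) :
    (u ++ ([c₀,c₁,c₂] ++ v))[q]? =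
      if q < u.length then u[q]? else if q = u.length then some c₀
        else if q = u.length+1 then some c₁ else if q = u.length+2 then some c₂
        else v[q - u.length - 3]? := by
  rw [List.getElem?_append]
  by_cases h1 : q < u.length
  · simp [h1]
  · rw [if_neg h1, List.getElem?_append]
    by_cases h2 : q = u.length
    · subst h2; simp
    by_cases h3 : q = u.length + 1
    · subst h3; simp [show u.length+1-u.length = 1 by omega]
    by_cases h4 : q = u.length + 2
    · subst h4; simp [show u.length+2-u.length = 2 by omega]
    · have h5 : ¬ (q - u.length < ([c₀,c₁,c₂] : List B).length) := by simp; omega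
      rw [if_neg h1, if_neg h2, if_neg h3, if_neg h4, if_neg h5]
      congr 1
      try simp

lemma pattern_getElem? (w : List B) (p : ℕ) (hp : p + 3 ≤ w.length) (c₀ c₁ c₂ : B) (q : ℕ) :
    (w.take p ++ ([c₀,c₁,c₂] ++ w.drop (p+3)))[q]? =
      if q < p then w[q]? else if q = p then some c₀ else if q = p+1 then some c₁
        else if q = p+2 then some c₂ else w[q]? := by
  have hl : (w.take p).length = p := by simp; omega
  rw [app3_getElem?, hl]
  by_cases h1 : q < p
  · simp [h1, List.getElem?_take]
  rw [if_neg h1, if_neg h1]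
  by_cases h2 : q = p
  · simp [h2]
  by_cases h3 : q = p+1
  · simp [h2, h3]
  by_cases h4 : q = p+2
  · simp [h2, h3, h4]
  · rw [if_neg h2, if_neg h3, if_neg h4, if_neg h2, if_neg h3, if_neg h4,
      List.getElem?_drop]
    congr 1
    omega

lemma isBraidMove_iff (M : CoxeterMatrix B) (w w' : List B) :
    IsBraidMove M w w' ↔ ∃ (p : ℕ) (s t : B), M s t = 3 ∧
      w[p]? = some s ∧ w[p+1]? = some t ∧ w[p+2]? = some s ∧
      w'[p]? = some t ∧ w'[p+1]? = some s ∧ w'[p+2]? = some t ∧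
      ∀ q, q < p ∨ p + 2 < q → w'[q]? = w[q]? := by
  constructor
  · rintro ⟨u, v, s, t, h3, rfl, rfl⟩
    rw [List.append_assoc, List.append_assoc]
    refine ⟨u.length, s, t, h3, ?_, ?_, ?_, ?_, ?_, ?_, ?_⟩ <;>
      [skip; skip; skip; skip; skip; skip;
       (intro q hq
        rw [app3_getElem?, app3_getElem?]
        rcases hq with hq | hq
        · simp [hq]
        · rw [if_neg (by omega : ¬ q < u.length), if_neg (by omega : ¬ q = u.length),
            if_neg (by omega : ¬ q = u.length + 1), if_neg (by omega : ¬ q = u.length + 2),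
            if_neg (by omega : ¬ q < u.length), if_neg (by omega : ¬ q = u.length),
            if_neg (by omega : ¬ q = u.length + 1), if_neg (by omega : ¬ q = u.length + 2)])] <;>
      (rw [app3_getElem?]; simp)
  · rintro ⟨p, s, t, h3, hw0, hw1, hw2, hv0, hv1, hv2, hoff⟩
    have hp : p + 3 ≤ w.length := by
      obtain ⟨h, _⟩ := List.getElem?_eq_some_iff.1 hw2; omega
    refine ⟨w.take p, w.drop (p+3), s, t, h3, ?_, ?_⟩ <;> rw [List.append_assoc]
    · apply List.ext_getElem?
      intro q
      rw [pattern_getElem? w p hp]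
      by_cases h1 : q < p
      · simp [h1]
      by_cases h2 : q = p
      · simp [h1, h2, hw0]
      by_cases h3' : q = p+1
      · simp [h1, h2, h3', hw1]
      by_cases h4 : q = p+2
      · simp [h1, h2, h3', h4, hw2]
      · simp [h1, h2, h3', h4]
    · apply List.ext_getElem?
      intro q
      rw [pattern_getElem? w p hp]
      by_cases h1 : q < p
      · simp [h1]; exact hoff q (Or.inl h1)
      by_cases h2 : q = p
      · simp [h1, h2, hv0]
      by_cases h3' : q = p+1
      · simp [h1, h2, h3', hv1]
      by_cases h4 : q = p+2
      · simp [h1, h2, h3', h4, hv2]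
      · simp [h1, h2, h3', h4]; exact hoff q (Or.inr (by omega))

/-- Toggle the `j`-th bit. -/
def flip (x : ℕ → Bool) (j : ℕ) : ℕ → Bool := fun i => if i = j then !(x i) else x i

/-- The letter at position `k` of the word determined by the bit string `x`. -/
def ent (a : B) (t : ℕ → B) (x : ℕ → Bool) (k : ℕ) : B :=
  if k % 2 = 1 then (if x (k/2) then a else t (k/2))
  else if 1 ≤ k/2 ∧ x (k/2 - 1) = true then t (k/2 - 1)
  else if x (k/2) then t (k/2) else a

/-- The word determined by the bit string `x`. -/
def wrd (a : B) (t : ℕ → B) (r : ℕ) (x : ℕ → Bool) : List B :=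
  List.ofFn (fun k : Fin (2*r+1) => ent a t x k.1)

/-- Admissible bit strings: supported below `r`, no two consecutive ones. -/
def Adm (r : ℕ) (x : ℕ → Bool) : Prop :=
  (∀ j, r ≤ j → x j = false) ∧ ∀ j, ¬(x j = true ∧ x (j+1) = true)

variable (a : B) (t : ℕ → B) (r : ℕ) (x : ℕ → Bool) {M : CoxeterMatrix B}

lemma wrd_length : (wrd a t r x).length = 2*r+1 := by simp [wrd]

lemma wrd_getElem? (k : ℕ) :
    (wrd a t r x)[k]? = if k < 2*r+1 then some (ent a t x k) else none := by
  rw [wrd, List.getElem?_ofFn]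
  split <;> simp_all

lemma ent_odd (m : ℕ) : ent a t x (2*m+1) = if x m then a else t m := by
  unfold ent
  rw [if_pos (by omega), show (2*m+1)/2 = m by omega]

lemma ent_even (m : ℕ) :
    ent a t x (2*m) = if 1 ≤ m ∧ x (m - 1) = true then t (m-1) else if x m then t m else a := by
  unfold ent
  rw [if_neg (by omega), show (2*m)/2 = m by omega]

lemma flip_eq_of_ne {i j : ℕ} (h : i ≠ j) : flip x j i = x i := by simp [flip, h]

lemma flip_self (j : ℕ) : flip x j j = !(x j) := by simp [flip]

lemma flip_flip (j : ℕ) : flip (flip x j) j = x := by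
  funext i
  by_cases h : i = j <;> simp [flip, h]

lemma ent_flip_eq (j q : ℕ) (h : q < 2*j ∨ 2*j+2 < q) :
    ent a t (flip x j) q = ent a t x q := by
  rcases Nat.even_or_odd q with ⟨m, rfl⟩ | ⟨m, rfl⟩
  · rw [show m + m = 2*m by ring, ent_even, ent_even,
      flip_eq_of_ne x (show m - 1 ≠ j by omega), flip_eq_of_ne x (show m ≠ j by omega)]
  · rw [ent_odd, ent_odd, flip_eq_of_ne x (show m ≠ j by omega)]

/-- Helper: a braid move between two words of the family, concentrated at block `j`. -/
lemma wrd_move {j : ℕ} (hj : j < r) {y : ℕ → Bool} {s u : B} (h3 : M s u = 3)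
    (e0 : ent a t x (2*j) = s) (e1 : ent a t x (2*j+1) = u) (e2 : ent a t x (2*j+2) = s)
    (f0 : ent a t y (2*j) = u) (f1 : ent a t y (2*j+1) = s) (f2 : ent a t y (2*j+2) = u)
    (hoff : ∀ q, q < 2*j ∨ 2*j+2 < q → ent a t y q = ent a t x q) :
    IsBraidMove M (wrd a t r x) (wrd a t r y) := by
  rw [isBraidMove_iff]
  refine ⟨2*j, s, u, h3, ?_, ?_, ?_, ?_, ?_, ?_, ?_⟩
  · rw [wrd_getElem?, if_pos (by omega), e0]
  · rw [show 2*j+1+1 = 2*j+2 from rfl] at *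
    rw [wrd_getElem?, if_pos (by omega), e1]
  · rw [show 2*j+2 = 2*j+2 from rfl, wrd_getElem?, if_pos (by omega)]
    rw [show 2*j+1+1 = 2*j+2 from rfl, e2]
  · rw [wrd_getElem?, if_pos (by omega), f0]
  · rw [wrd_getElem?, if_pos (by omega), f1]
  · rw [show 2*j+1+1 = 2*j+2 from rfl, wrd_getElem?, if_pos (by omega), f2]
  · intro q hq
    rw [wrd_getElem?, wrd_getElem?]
    by_cases h : q < 2*r+1
    · rw [if_pos h, if_pos h, hoff q hq]
    · rw [if_neg h, if_neg h]

end Aux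

section Family

variable (a : B) (t : ℕ → B) (r : ℕ) {M : CoxeterMatrix B}

lemma a_ne_t (h3 : ∀ j, j < r → M a (t j) = 3) {j : ℕ} (hj : j < r) : a ≠ t j := by
  intro h
  have := h3 j hj
  rw [← h, M.diagonal] at this
  omega

/-- Toggling a `1`-bit off is a braid move. -/
lemma move_off (h3 : ∀ j, j < r → M a (t j) = 3) {x : ℕ → Bool} (hx : Adm r x) {j : ℕ} (hj : j < r) (hxj : x j = true) :
    IsBraidMove M (wrd a t r x) (wrd a t r (flip x j)) := by
  have hprev : x (j-1) = false ∨ j = 0 := by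
    rcases Nat.eq_zero_or_pos j with h | h
    · exact Or.inr h
    · left
      by_contra hc
      exact hx.2 (j-1) ⟨by simpa using Bool.not_eq_false _ |>.mp hc, by
        rwa [Nat.sub_add_cancel h]⟩
  have hnext : x (j+1) = false := by
    by_contra hc
    exact hx.2 j ⟨hxj, Bool.not_eq_false _ |>.mp hc⟩
  have hc1 : ¬ (1 ≤ j ∧ x (j - 1) = true) := by
    rintro ⟨h1, h2⟩
    rcases hprev with h | h
    · rw [h] at h2; exact Bool.false_ne_true h2
    · omega
  apply wrd_move a t r x hj (show M (t j) a = 3 from (M.symmetric a (t j)) ▸ h3 j hj)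
  · rw [ent_even, if_neg hc1, if_pos hxj]
  · rw [ent_odd, if_pos hxj]
  · rw [show 2*j+2 = 2*(j+1) from by ring, ent_even, if_pos ⟨by omega, by
      rw [show j+1-1 = j from rfl]; exact hxj⟩, show j+1-1 = j from rfl]
  · rw [ent_even]
    have : ¬ (1 ≤ j ∧ flip x j (j-1) = true) := by
      rintro ⟨h1, h2⟩
      rw [flip_eq_of_ne x (by omega)] at h2
      exact hc1 ⟨h1, h2⟩
    rw [if_neg this, flip_self, hxj]
    simp
  · rw [ent_odd, flip_self, hxj]
    simp
  · rw [show 2*j+2 = 2*(j+1) from by ring, ent_even]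
    have : ¬ (1 ≤ j+1 ∧ flip x j (j+1-1) = true) := by
      rintro ⟨h1, h2⟩
      rw [show j+1-1 = j from rfl, flip_self, hxj] at h2
      simp at h2
    rw [if_neg this, flip_eq_of_ne x (by omega), hnext]
    simp
  · exact fun q hq => ent_flip_eq a t x j q hq

/-- Toggling a `0`-bit on (with both neighbours `0`) is a braid move. -/
lemma move_on (h3 : ∀ j, j < r → M a (t j) = 3) {x : ℕ → Bool} {j : ℕ} (hj : j < r) (hxj : x j = false)
    (hprev : ∀ i, i + 1 = j → x i = false) (hnext : x (j+1) = false) :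
    IsBraidMove M (wrd a t r x) (wrd a t r (flip x j)) := by
  have hc1 : ¬ (1 ≤ j ∧ x (j - 1) = true) := by
    rintro ⟨h1, h2⟩
    rw [hprev (j-1) (by omega)] at h2
    exact Bool.false_ne_true h2
  apply wrd_move a t r x hj (h3 j hj)
  · rw [ent_even, if_neg hc1, hxj]
    simp
  · rw [ent_odd, hxj]
    simp
  · rw [show 2*j+2 = 2*(j+1) from by ring, ent_even]
    have : ¬ (1 ≤ j+1 ∧ x (j+1-1) = true) := by
      rintro ⟨h1, h2⟩
      rw [show j+1-1 = j from rfl, hxj] at h2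
      exact Bool.false_ne_true h2
    rw [if_neg this, hnext]
    simp
  · rw [ent_even]
    have : ¬ (1 ≤ j ∧ flip x j (j-1) = true) := by
      rintro ⟨h1, h2⟩
      rw [flip_eq_of_ne x (by omega), hprev (j-1) (by omega)] at h2
      exact Bool.false_ne_true h2
    rw [if_neg this, flip_self, hxj]
    simp
  · rw [ent_odd, flip_self, hxj]
    simp
  · rw [show 2*j+2 = 2*(j+1) from by ring, ent_even,
      if_pos ⟨by omega, by rw [show j+1-1 = j from rfl, flip_self, hxj]; simp⟩,
      show j+1-1 = j from rfl]
  · exact fun q hq => ent_flip_eq a t x j q hq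

/-- Every braid move out of a family word lands in the family (given the shadow condition). -/
lemma move_classify (h3 : ∀ j, j < r → M a (t j) = 3)
    (hM : ∀ j, j + 1 < r → M (t j) (t (j+1)) ≠ 3) {x : ℕ → Bool} (hx : Adm r x) {w' : List B}
    (hmv : IsBraidMove M (wrd a t r x) w')
    (hshadow : ∀ p, HasShadowAt M (wrd a t r x) p → ∃ j, j < r ∧ p = 2*j) :
    ∃ j, j < r ∧ Adm r (flip x j) ∧ w' = wrd a t r (flip x j) := by
  rw [isBraidMove_iff] at hmv
  obtain ⟨p, s, u, hsu, hw0, hw1, hw2, hv0, hv1, hv2, hoff⟩ := hmv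
  obtain ⟨j, hj, rfl⟩ : ∃ j, j < r ∧ p = 2*j := by
    apply hshadow
    exact ⟨s, u, hsu, hw0, hw1, hw2⟩
  have hlen : 2*j+2 < 2*r+1 := by omega
  have e0 : ent a t x (2*j) = s := by
    rw [wrd_getElem?, if_pos (by omega)] at hw0
    exact Option.some_injective _ hw0
  have e1 : ent a t x (2*j+1) = u := by
    rw [wrd_getElem?, if_pos (by omega)] at hw1
    exact Option.some_injective _ hw1
  have e2 : ent a t x (2*j+2) = s := by
    rw [show 2*j+1+1 = 2*j+2 from rfl, wrd_getElem?, if_pos (by omega)] at hw2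
    exact Option.some_injective _ hw2
  -- the value of w' is then determined
  have hw' : ∀ y : ℕ → Bool, ent a t y (2*j) = u → ent a t y (2*j+1) = s →
      ent a t y (2*j+2) = u → (∀ q, q < 2*j ∨ 2*j+2 < q → ent a t y q = ent a t x q) →
      w' = wrd a t r y := by
    intro y g0 g1 g2 goff
    apply List.ext_getElem?
    intro q
    rw [wrd_getElem?]
    by_cases h1 : q < 2*j
    · rw [hoff q (Or.inl h1), wrd_getElem?]
      by_cases h : q < 2*r+1
      · rw [if_pos h, if_pos h, goff q (Or.inl h1)]
      · rw [if_neg h, if_neg h]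
    by_cases h2 : q = 2*j
    · subst h2; rw [if_pos (by omega), g0, hv0]
    by_cases h3' : q = 2*j+1
    · subst h3'; rw [if_pos (by omega), g1, hv1]
    by_cases h4 : q = 2*j+2
    · subst h4; rw [if_pos (by omega), g2]
      rw [show 2*j+1+1 = 2*j+2 from rfl] at hv2
      rw [hv2]
    · have hq : 2*j+2 < q := by omega
      rw [hoff q (Or.inr hq), wrd_getElem?]
      by_cases h : q < 2*r+1
      · rw [if_pos h, if_pos h, goff q (Or.inr hq)]
      · rw [if_neg h, if_neg h]
  by_cases hxj : x j = true
  · -- toggling off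
    have hprev : ∀ i, i + 1 = j → x i = false := by
      intro i hi
      by_contra hc
      exact hx.2 i ⟨Bool.not_eq_false _ |>.mp hc, hi ▸ hxj⟩
    have hnext : x (j+1) = false := by
      by_contra hc
      exact hx.2 j ⟨hxj, Bool.not_eq_false _ |>.mp hc⟩
    refine ⟨j, hj, ?_, ?_⟩
    · constructor
      · intro i hi
        by_cases h : i = j
        · subst h; rw [flip_self, hxj]; rfl
        · rw [flip_eq_of_ne x h]; exact hx.1 i hi
      · intro i
        rintro ⟨ha', hb'⟩
        have hai : x i = true := by
          by_cases h : i = j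
          · subst h; rw [flip_self, hxj] at ha'; simp at ha'
          · rwa [flip_eq_of_ne x h] at ha'
        have hbi : x (i+1) = true := by
          by_cases h : i + 1 = j
          · rw [h, flip_self, hxj] at hb'; simp at hb'
          · rwa [flip_eq_of_ne x h] at hb'
        exact hx.2 i ⟨hai, hbi⟩
    · apply hw'
      · rw [ent_even]
        have hc1 : ¬ (1 ≤ j ∧ flip x j (j-1) = true) := by
          rintro ⟨hh1, hh2⟩
          rw [flip_eq_of_ne x (by omega), hprev (j-1) (by omega)] at hh2
          exact Bool.false_ne_true hh2
        have hu : u = a := by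
          rw [ent_odd, if_pos hxj] at e1
          exact e1.symm
        rw [if_neg hc1, flip_self, hxj, hu]
        simp
      · -- s = t j
        have hs : s = t j := by
          rw [ent_even] at e0
          have hc1 : ¬ (1 ≤ j ∧ x (j-1) = true) := by
            rintro ⟨hh1, hh2⟩
            rw [hprev (j-1) (by omega)] at hh2
            exact Bool.false_ne_true hh2
          rw [if_neg hc1, if_pos hxj] at e0
          exact e0.symm
        rw [ent_odd, flip_self, hxj, hs]
        simp
      · have hu : u = a := by
          rw [ent_odd, if_pos hxj] at e1
          exact e1.symm
        rw [show 2*j+2 = 2*(j+1) from by ring, ent_even]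
        have hc1' : ¬ (1 ≤ j+1 ∧ flip x j (j+1-1) = true) := by
          rintro ⟨hh1, hh2⟩
          rw [show j+1-1 = j from rfl, flip_self, hxj] at hh2
          simp at hh2
        rw [if_neg hc1', flip_eq_of_ne x (by omega), hnext, hu]
        simp
      · exact fun q hq => ent_flip_eq a t x j q hq
  · -- x j = false : toggling on
    have hxj' : x j = false := Bool.not_eq_true _ |>.mp hxj
    have hu : u = t j := by
      rw [ent_odd, hxj'] at e1
      simp at e1
      exact e1.symm
    have hprev : ∀ i, i + 1 = j → x i = false := by
      intro i hi
      by_contra hc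
      have hxi : x i = true := Bool.not_eq_false _ |>.mp hc
      -- then s = t (j-1) = t i and M s u = M (t i) (t j) = 3: contradiction with hM
      have hs : s = t i := by
        rw [ent_even, if_pos ⟨by omega, by rw [show j - 1 = i by omega]; exact hxi⟩,
          show j - 1 = i by omega] at e0
        exact e0.symm
      refine hM i (by omega) ?_
      rw [hi, ← hs, ← hu]
      exact hsu
    have hc1 : ¬ (1 ≤ j ∧ x (j-1) = true) := by
      rintro ⟨hh1, hh2⟩
      rw [hprev (j-1) (by omega)] at hh2
      exact Bool.false_ne_true hh2
    have hs : s = a := by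
      rw [ent_even, if_neg hc1, hxj'] at e0
      simp at e0
      exact e0.symm
    have hnext : x (j+1) = false := by
      by_contra hc
      have hxn : x (j+1) = true := Bool.not_eq_false _ |>.mp hc
      have hst : s = t (j+1) := by
        have hcc : ¬ (1 ≤ j+1 ∧ x (j+1-1) = true) := by
          rintro ⟨hh1, hh2⟩
          rw [show j+1-1 = j from rfl, hxj'] at hh2
          exact Bool.false_ne_true hh2
        rw [show 2*j+2 = 2*(j+1) by ring, ent_even, if_neg hcc, if_pos hxn] at e2
        exact e2.symm
      have hj1 : j + 1 < r := by
        by_contra hc'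
        rw [hx.1 (j+1) (by omega)] at hxn
        exact Bool.false_ne_true hxn
      exact a_ne_t a t r h3 hj1 (by rw [← hs, hst])
    refine ⟨j, hj, ?_, ?_⟩
    · constructor
      · intro i hi
        by_cases h : i = j
        · subst h; omega
        · rw [flip_eq_of_ne x h]; exact hx.1 i hi
      · intro i
        rintro ⟨ha', hb'⟩
        by_cases h : i = j
        · subst h
          rw [flip_eq_of_ne x (by omega), hnext] at hb'
          exact Bool.false_ne_true hb'
        by_cases h' : i + 1 = j
        · rw [flip_eq_of_ne x h, hprev i h'] at ha'
          exact Bool.false_ne_true ha'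
        · rw [flip_eq_of_ne x h] at ha'
          rw [flip_eq_of_ne x h'] at hb'
          exact hx.2 i ⟨ha', hb'⟩
    · apply hw'
      · rw [ent_even]
        have : ¬ (1 ≤ j ∧ flip x j (j-1) = true) := by
          rintro ⟨hh1, hh2⟩
          rw [flip_eq_of_ne x (by omega), hprev (j-1) (by omega)] at hh2
          exact Bool.false_ne_true hh2
        rw [if_neg this, flip_self, hxj', hu]
        simp
      · rw [ent_odd, flip_self, hxj', hs]
        simp
      · rw [show 2*j+2 = 2*(j+1) from by ring, ent_even,
          if_pos ⟨by omega, by rw [show j+1-1 = j from rfl, flip_self, hxj']; simp⟩,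
          show j+1-1 = j from rfl, hu]
      · exact fun q hq => ent_flip_eq a t x j q hq

lemma adm_flip_of_true {x : ℕ → Bool} (hx : Adm r x) {j : ℕ} (hxj : x j = true) :
    Adm r (flip x j) := by
  constructor
  · intro i hi
    by_cases h : i = j
    · subst h; rw [flip_self, hxj]; rfl
    · rw [flip_eq_of_ne x h]; exact hx.1 i hi
  · intro i
    rintro ⟨ha', hb'⟩
    have hai : x i = true := by
      by_cases h : i = j
      · subst h; rw [flip_self, hxj] at ha'; simp at ha'
      · rwa [flip_eq_of_ne x h] at ha'
    have hbi : x (i+1) = true := by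
      by_cases h : i + 1 = j
      · rw [h, flip_self, hxj] at hb'; simp at hb'
      · rwa [flip_eq_of_ne x h] at hb'
    exact hx.2 i ⟨hai, hbi⟩

lemma wrd_inj (hat : ∀ j, j < r → a ≠ t j) {x y : ℕ → Bool}
    (hx : Adm r x) (hy : Adm r y) (h : wrd a t r x = wrd a t r y) : x = y := by
  funext i
  by_cases hi : i < r
  · have h1 : (wrd a t r x)[2*i+1]? = (wrd a t r y)[2*i+1]? := by rw [h]
    rw [wrd_getElem?, wrd_getElem?, if_pos (by omega), if_pos (by omega)] at h1
    have h2 : ent a t x (2*i+1) = ent a t y (2*i+1) := Option.some_injective _ h1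
    rw [ent_odd, ent_odd] at h2
    cases hxi : x i <;> cases hyi : y i <;> rw [hxi, hyi] at h2 <;> simp at h2 <;> try rfl
    · exact absurd h2.symm (hat i hi)
    · exact absurd h2 (hat i hi)
  · rw [hx.1 i (by omega), hy.1 i (by omega)]

lemma reach (h3 : ∀ j, j < r → M a (t j) = 3) :
    ∀ (n : ℕ) (x : ℕ → Bool), Adm r x →
      ((Finset.range r).filter (fun i => x i = true)).card = n →
      BraidEquiv M (wrd a t r (fun _ => false)) (wrd a t r x) := by
  intro n
  induction n with
  | zero =>
    intro x hx hc
    have hxf : x = fun _ => false := by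
      funext i
      by_cases h : i < r
      · by_contra hne
        have : i ∈ (Finset.range r).filter (fun i => x i = true) := by
          simp [Finset.mem_filter, h]
          exact Bool.not_eq_false _ |>.mp hne
        rw [Finset.card_eq_zero.1 hc] at this
        exact absurd this (Finset.notMem_empty i)
      · exact hx.1 i (by omega)
    rw [hxf]
    exact Relation.ReflTransGen.refl
  | succ n ih =>
    intro x hx hc
    obtain ⟨j, hjmem⟩ : ((Finset.range r).filter (fun i => x i = true)).Nonempty :=
      Finset.card_pos.1 (by omega)
    have hjr : j < r := Finset.mem_range.1 (Finset.mem_filter.1 hjmem).1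
    have hxj : x j = true := (Finset.mem_filter.1 hjmem).2
    have hyadm : Adm r (flip x j) := adm_flip_of_true r hx hxj
    have hcard : ((Finset.range r).filter (fun i => flip x j i = true)).card = n := by
      have hset : (Finset.range r).filter (fun i => flip x j i = true) =
          ((Finset.range r).filter (fun i => x i = true)).erase j := by
        ext i
        simp only [Finset.mem_filter, Finset.mem_erase, Finset.mem_range]
        constructor
        · rintro ⟨h1, h2⟩
          by_cases h : i = j
          · subst h; rw [flip_self, hxj] at h2; simp at h2
          · rw [flip_eq_of_ne x h] at h2; exact ⟨h, h1, h2⟩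
        · rintro ⟨h, h1, h2⟩
          rw [flip_eq_of_ne x h]; exact ⟨h1, h2⟩
      rw [hset, Finset.card_erase_of_mem hjmem, hc]
      omega
    refine (ih (flip x j) hyadm hcard).tail ?_
    have hgoal : IsBraidMove M (wrd a t r (flip x j)) (wrd a t r (flip (flip x j) j)) := by
      apply move_on a t r h3 hjr
      · rw [flip_self, hxj]; rfl
      · intro i hi
        rw [flip_eq_of_ne x (by omega)]
        by_contra hc'
        exact hx.2 i ⟨Bool.not_eq_false _ |>.mp hc', hi ▸ hxj⟩
      · rw [flip_eq_of_ne x (by omega)]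
        by_contra hc'
        exact hx.2 j ⟨hxj, Bool.not_eq_false _ |>.mp hc'⟩
    rwa [flip_flip] at hgoal

end Family

/-- the braid graph of a Fibonacci link of rank `r` is isomorphic to the
Fibonacci cube `𝔽_r`, the subgraph of `Q_r` induced by the binary strings with no two
consecutive ones. -/
theorem statement_17 {B W : Type*} [Group W] {M : CoxeterMatrix B}
    (cs : CoxeterSystem M W) (hsl : SimplyLaced M) (htf : TriangleFree M)
    (φ : List B) (r : ℕ) (hfib : IsFibLink cs φ r) :
    Nonempty (braidGraph M φ ≃g
      (hypercube r).induce {x : Fin r → Bool | NoConsecOnes x}) := by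
  classical
  obtain ⟨⟨hred, hlen, hsha⟩, hself⟩ := hfib
  have h0 : 0 < φ.length := by omega
  set a : B := φ[0]'h0 with ha_def
  set t : ℕ → B := fun j => φ.getD (2*j+1) a with ht_def
  have hshad : ∀ j, j < r → HasShadowAt M φ (2*j) := by
    intro j hj
    exact hself _ ((hsha (2*j)).2 ⟨j, hj, rfl⟩)
  have heven : ∀ i, i ≤ r → φ[2*i]? = some a := by
    intro i
    induction i with
    | zero =>
      intro _
      show φ[0]? = some a
      rw [ha_def]
      exact List.getElem?_eq_getElem h0
    | succ i ih =>
      intro h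
      obtain ⟨s, u, h3', p0, p1, p2⟩ := hshad i (by omega)
      have hs : s = a := by
        have h' := ih (by omega)
        rw [p0] at h'
        exact Option.some_injective _ h'
      rw [show 2*(i+1) = 2*i+1+1 by ring, p2, hs]
  have hodd : ∀ i, i < r → φ[2*i+1]? = some (t i) := by
    intro i hi
    have hlt : 2*i+1 < φ.length := by omega
    rw [List.getElem?_eq_getElem hlt]
    congr 1
    rw [ht_def]
    simp [List.getD_eq_getElem?_getD, List.getElem?_eq_getElem hlt]
  have h3 : ∀ j, j < r → M a (t j) = 3 := by
    intro j hj
    obtain ⟨s, u, h3', p0, p1, p2⟩ := hshad j hj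
    have hs : s = a := by
      have h' := heven j (by omega)
      rw [p0] at h'
      exact Option.some_injective _ h'
    have hu : u = t j := by
      have h' := hodd j hj
      rw [p1] at h'
      exact Option.some_injective _ h'
    rw [← hs, ← hu]
    exact h3'
  have hat : ∀ j, j < r → a ≠ t j := fun j hj => a_ne_t a t r h3 hj
  have htne : ∀ j, j + 1 < r → t j ≠ t (j+1) := by
    intro j hj heq
    have hshadow : HasShadowAt M φ (2*j+1) := by
      refine ⟨t j, a, ?_, hodd j (by omega), ?_, ?_⟩
      · rw [M.symmetric (t j) a]
        exact h3 j (by omega)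
      · rw [show 2*j+1+1 = 2*(j+1) by ring]
        exact heven (j+1) (by omega)
      · rw [show 2*j+1+2 = 2*(j+1)+1 by ring, hodd (j+1) (by omega), heq]
    obtain ⟨j', hj', heq'⟩ := (hsha (2*j+1)).1 ⟨φ, Relation.ReflTransGen.refl, hshadow⟩
    omega
  have hMtri : ∀ j, j+1 < r → M (t j) (t (j+1)) ≠ 3 := by
    intro j hj
    exact htf (t j) a (t (j+1)) (Ne.symm (hat j (by omega))) (hat (j+1) hj) (htne j hj)
      (by rw [M.symmetric (t j) a]; exact h3 j (by omega)) (h3 (j+1) hj)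
  have hφw : φ = wrd a t r (fun _ => false) := by
    apply List.ext_getElem?
    intro q
    rw [wrd_getElem?]
    by_cases hq : q < 2*r+1
    · rw [if_pos hq]
      rcases Nat.even_or_odd q with ⟨m, rfl⟩ | ⟨m, rfl⟩
      · rw [show m+m = 2*m by ring, ent_even, if_neg (by simp), if_neg (by simp)]
        exact heven m (by omega)
      · rw [ent_odd, if_neg (by simp)]
        exact hodd m (by omega)
    · rw [if_neg hq]
      exact List.getElem?_eq_none (by omega)
  have hclass : ∀ β, β ∈ BraidClass M φ → ∃ x, Adm r x ∧ β = wrd a t r x := by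
    intro β hβ
    induction hβ with
    | refl => exact ⟨fun _ => false, ⟨fun _ _ => rfl, fun j => by simp⟩, hφw⟩
    | tail hbe hmv ih =>
      obtain ⟨x, hx, hb⟩ := ih
      subst hb
      obtain ⟨j, hj, hadm, heqw⟩ := move_classify a t r h3 hMtri hx hmv
        (fun p hp => (hsha p).1 ⟨_, hbe, hp⟩)
      exact ⟨flip x j, hadm, heqw⟩
  have hmemw : ∀ x, Adm r x → wrd a t r x ∈ BraidClass M φ := by
    intro x hx
    have h' := reach a t r h3 _ x hx rfl
    rw [← hφw] at h'
    exact h'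
  -- the encoding of Fibonacci-cube vertices as bit strings on ℕ
  let E : (Fin r → Bool) → ℕ → Bool := fun X j => if h : j < r then X ⟨j, h⟩ else false
  have hE : ∀ X : Fin r → Bool, NoConsecOnes X → Adm r (E X) := by
    intro X hX
    constructor
    · intro j hj
      simp only [E]
      rw [dif_neg (by omega)]
    · rintro j ⟨h1, h2⟩
      by_cases hjr : j + 1 < r
      · have hj : j < r := by omega
        simp only [E] at h1 h2
        rw [dif_pos hj] at h1
        rw [dif_pos hjr] at h2
        exact hX ⟨j, hj⟩ hjr ⟨h1, h2⟩
      · simp only [E] at h2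
        rw [dif_neg hjr] at h2
        exact Bool.false_ne_true h2
  have hEX : ∀ (X : Fin r → Bool) (i : Fin r), E X i.1 = X i := by
    intro X i
    simp only [E]
    rw [dif_pos i.2]
  let F : {x : Fin r → Bool | NoConsecOnes x} → BraidClass M φ :=
    fun X => ⟨wrd a t r (E X.1), hmemw _ (hE X.1 X.2)⟩
  have hinj : Function.Injective F := by
    intro X Y h
    have h' : wrd a t r (E X.1) = wrd a t r (E Y.1) := congrArg Subtype.val h
    have h'' := wrd_inj a t r hat (hE X.1 X.2) (hE Y.1 Y.2) h'
    apply Subtype.ext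
    funext i
    have h3' := congrFun h'' i.1
    rwa [hEX, hEX] at h3'
  have hsurj : Function.Surjective F := by
    rintro ⟨β, hβ⟩
    obtain ⟨x, hx, rfl⟩ := hclass β hβ
    refine ⟨⟨fun i => x i.1, ?_⟩, ?_⟩
    · intro i h hcontra
      exact hx.2 i.1 hcontra
    · apply Subtype.ext
      show wrd a t r (E (fun i => x i.1)) = wrd a t r x
      congr 1
      funext i
      by_cases h : i < r
      · simp only [E]
        rw [dif_pos h]
      · simp only [E]
        rw [dif_neg h, hx.1 i (by omega)]
  have hmoves : ∀ (x y : ℕ → Bool), Adm r x → Adm r y →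
      ((IsBraidMove M (wrd a t r x) (wrd a t r y) ∨ IsBraidMove M (wrd a t r y) (wrd a t r x)) ↔
      (∃ j, j < r ∧ y = flip x j)) := by
    intro x y hx hy
    have hshadowOf : ∀ (z : ℕ → Bool), Adm r z → ∀ p, HasShadowAt M (wrd a t r z) p →
        ∃ j, j < r ∧ p = 2*j := by
      intro z hz p hp
      exact (hsha p).1 ⟨wrd a t r z, hmemw z hz, hp⟩
    constructor
    · rintro (hm | hm)
      · obtain ⟨j, hj, hadm, heq⟩ := move_classify a t r h3 hMtri hx hm (hshadowOf x hx)
        exact ⟨j, hj, wrd_inj a t r hat hy hadm heq⟩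
      · obtain ⟨j, hj, hadm, heq⟩ := move_classify a t r h3 hMtri hy hm (hshadowOf y hy)
        have hxe : x = flip y j := wrd_inj a t r hat hx hadm heq
        refine ⟨j, hj, ?_⟩
        rw [hxe, flip_flip]
    · rintro ⟨j, hj, rfl⟩
      by_cases hxj : x j = true
      · exact Or.inl (move_off a t r h3 hx hj hxj)
      · right
        have hxj' : x j = false := Bool.not_eq_true _ |>.mp hxj
        have hyj : flip x j j = true := by rw [flip_self, hxj']; rfl
        have h' := move_off a t r h3 hy hj hyj
        rwa [flip_flip] at h'
  have ham1 : ∀ (X Y : Fin r → Bool) (j : ℕ) (hj : j < r), E Y = flip (E X) j →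
      hammingDist X Y = 1 := by
    intro X Y j hj hE'
    have hdiff : ∀ i : Fin r, X i ≠ Y i ↔ i = ⟨j, hj⟩ := by
      intro i
      constructor
      · intro hne
        by_contra hne'
        have hij : i.1 ≠ j := fun h => hne' (Fin.ext h)
        have h' := congrFun hE' i.1
        rw [flip_eq_of_ne (E X) hij, hEX, hEX] at h'
        exact hne h'.symm
      · rintro rfl
        have h' := congrFun hE' j
        rw [flip_self] at h'
        have h1 : E Y j = Y (⟨j, hj⟩ : Fin r) := hEX Y ⟨j, hj⟩
        have h2 : E X j = X (⟨j, hj⟩ : Fin r) := hEX X ⟨j, hj⟩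
        rw [h1, h2] at h'
        rw [h']
        cases X (⟨j, hj⟩ : Fin r) <;> simp
    rw [hammingDist, Finset.card_eq_one]
    refine ⟨⟨j, hj⟩, ?_⟩
    ext i
    simp only [Finset.mem_filter, Finset.mem_univ, true_and, Finset.mem_singleton]
    exact hdiff i
  have ham2 : ∀ (X Y : Fin r → Bool), hammingDist X Y = 1 →
      ∃ j, j < r ∧ E Y = flip (E X) j := by
    intro X Y h
    rw [hammingDist, Finset.card_eq_one] at h
    obtain ⟨i₀, hi₀⟩ := h
    have hmem : ∀ i : Fin r, X i ≠ Y i ↔ i = i₀ := by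
      intro i
      rw [← Finset.mem_singleton, ← hi₀]
      simp [Finset.mem_filter]
    refine ⟨i₀.1, i₀.2, ?_⟩
    funext i
    by_cases hir : i < r
    · by_cases hij : i = i₀.1
      · have hieq : (⟨i, hir⟩ : Fin r) = i₀ := Fin.ext hij
        have hne := (hmem ⟨i, hir⟩).2 hieq
        have hLY : E Y i = Y (⟨i, hir⟩ : Fin r) := hEX Y ⟨i, hir⟩
        have hLX : E X i = X (⟨i, hir⟩ : Fin r) := hEX X ⟨i, hir⟩
        have hfl : flip (E X) i₀.1 i = !(E X i) := by
          rw [← hij]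
          exact flip_self (E X) i
        rw [hLY, hfl, hLX]
        cases hx' : X (⟨i, hir⟩ : Fin r) <;> cases hy' : Y (⟨i, hir⟩ : Fin r) <;>
          simp only [hx', hy'] at hne ⊢ <;> first | rfl | exact absurd rfl hne
      · have heq' : X (⟨i, hir⟩ : Fin r) = Y (⟨i, hir⟩ : Fin r) := by
          by_contra hc
          exact hij (congrArg Fin.val ((hmem ⟨i, hir⟩).1 hc))
        rw [flip_eq_of_ne (E X) hij, hEX Y ⟨i, hir⟩, hEX X ⟨i, hir⟩, heq']
    · have hir' : i ≠ i₀.1 := by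
        have := i₀.2
        omega
      rw [flip_eq_of_ne (E X) hir']
      simp only [E]
      rw [dif_neg hir, dif_neg hir]
  have hadj : ∀ X Y : {x : Fin r → Bool | NoConsecOnes x},
      (braidGraph M φ).Adj (F X) (F Y) ↔
        ((hypercube r).induce {x : Fin r → Bool | NoConsecOnes x}).Adj X Y := by
    intro X Y
    rw [braidGraph, SimpleGraph.fromRel_adj]
    rw [show ((hypercube r).induce {x : Fin r → Bool | NoConsecOnes x}).Adj X Y ↔
        (hypercube r).Adj X.1 Y.1 from by simp [SimpleGraph.comap_adj]]
    rw [hypercube, SimpleGraph.fromRel_adj]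
    constructor
    · rintro ⟨hne, hmv⟩
      obtain ⟨j, hj, hEy⟩ := (hmoves (E X.1) (E Y.1) (hE _ X.2) (hE _ Y.2)).1 hmv
      refine ⟨?_, Or.inl (ham1 X.1 Y.1 j hj hEy)⟩
      intro hXY
      apply hne
      have : X = Y := Subtype.ext hXY
      rw [this]
    · rintro ⟨hneXY, hham⟩
      have hham1 : hammingDist X.1 Y.1 = 1 := by
        rcases hham with h | h
        · exact h
        · rw [hammingDist_comm]
          exact h
      obtain ⟨j, hj, hEy⟩ := ham2 X.1 Y.1 hham1
      refine ⟨?_, (hmoves _ _ (hE _ X.2) (hE _ Y.2)).2 ⟨j, hj, hEy⟩⟩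
      intro h
      exact hneXY (congrArg Subtype.val (hinj (Subtype.ext (congrArg Subtype.val h))))
  let e := Equiv.ofBijective F ⟨hinj, hsurj⟩
  have iso : ((hypercube r).induce {x : Fin r → Bool | NoConsecOnes x}) ≃g braidGraph M φ :=
    ⟨e, hadj _ _⟩
  exact ⟨iso.symm⟩

end BraidFormal
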